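/- Let M be a matroid on a finite ground set E and let e ∈ E be an element which is not a coloop (i.e., e does not belong to every base of M). Then χ_M(T) = χ_{M∖e}(T) − χ_{M/e}(T), where M∖e is the deletion of e (the restriction of M to E \ {e}) and M/e is the contraction of e (the matroid on E \ {e} with rank function A ↦ rk_M(A ∪ {e}) − rk_M({e})). -/

import Mathlib

open Classical

set_option linter.unusedSectionVars false
set_option linter.unusedVariables false
noncomputable section

/-- The rank of a subset `A` in a matroid `M`: the size of a maximal independent
subset of `A`. -/
def Matroid.mrank {α : Type*} (M : Matroid α) (A : Set α) : ℕ :=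
  sSup (Set.ncard '' {I : Set α | M.Indep I ∧ I ⊆ A})

/-- The characteristic polynomial of a matroid `M` on a finite ground set:
`χ_M(T) = Σ_{A ⊆ E} (−1)^{|A|} T^{rk(E) − rk(A)}`. -/
def Matroid.charPoly {α : Type*} [Fintype α] (M : Matroid α) : Polynomial ℤ :=
  ∑ A ∈ (Set.toFinite M.E).toFinset.powerset,
    (-1) ^ A.card * Polynomial.X ^ (M.mrank M.E - M.mrank ↑A)


namespace Matroid
variable {α : Type*} [Fintype α] {M : Matroid α} {A B R : Set α}

lemma mrank_set_nonempty (M : Matroid α) (A : Set α) :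
    (Set.ncard '' {I : Set α | M.Indep I ∧ I ⊆ A}).Nonempty :=
  ⟨0, ⟨∅, ⟨M.empty_indep, Set.empty_subset A⟩, Set.ncard_empty α⟩⟩

lemma mrank_bddAbove (M : Matroid α) (A : Set α) :
    BddAbove (Set.ncard '' {I : Set α | M.Indep I ∧ I ⊆ A}) := by
  refine ⟨Fintype.card α, ?_⟩
  rintro n ⟨I, -, rfl⟩
  simpa [Set.ncard_univ] using Set.ncard_le_ncard (Set.subset_univ I) (Set.toFinite _)

lemma ncard_le_mrank {I : Set α} (hI : M.Indep I) (hIA : I ⊆ A) :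
    I.ncard ≤ M.mrank A :=
  le_csSup (M.mrank_bddAbove A) ⟨I, ⟨hI, hIA⟩, rfl⟩

lemma mrank_le {n : ℕ} (h : ∀ I : Set α, M.Indep I → I ⊆ A → I.ncard ≤ n) :
    M.mrank A ≤ n := by
  refine csSup_le (M.mrank_set_nonempty A) ?_
  rintro m ⟨I, ⟨hI, hIA⟩, rfl⟩
  exact h I hI hIA

lemma mrank_mono (M : Matroid α) (h : A ⊆ B) : M.mrank A ≤ M.mrank B :=
  mrank_le fun I hI hIA => ncard_le_mrank hI (hIA.trans h)

lemma IsBase.ncard_eq_mrank {B : Set α} (hB : M.IsBase B) : B.ncard = M.mrank M.E := by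
  refine le_antisymm (ncard_le_mrank hB.indep hB.subset_ground) (mrank_le fun I hI _ => ?_)
  obtain ⟨B', hB', hIB'⟩ := hI.exists_isBase_superset
  calc I.ncard ≤ B'.ncard := Set.ncard_le_ncard hIB' (Set.toFinite _)
    _ = B.ncard := hB'.ncard_eq_ncard_of_isBase hB

lemma mrank_restrict (M : Matroid α) (hA : A ⊆ R) : (M ↾ R).mrank A = M.mrank A := by
  have hset : {I : Set α | (M ↾ R).Indep I ∧ I ⊆ A} = {I : Set α | M.Indep I ∧ I ⊆ A} := by
    ext I
    simp only [Set.mem_setOf_eq, Matroid.restrict_indep_iff, and_assoc]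
    exact ⟨fun ⟨h, _, h2⟩ => ⟨h, h2⟩, fun ⟨h, h2⟩ => ⟨h, h2.trans hA, h2⟩⟩
  rw [Matroid.mrank, hset, Matroid.mrank]

lemma mrank_diff_singleton {e : α} (hB : ∃ B : Set α, M.IsBase B ∧ e ∉ B) :
    M.mrank (M.E \ {e}) = M.mrank M.E := by
  obtain ⟨B, hB, heB⟩ := hB
  refine le_antisymm (M.mrank_mono Set.diff_subset) ?_
  rw [← hB.ncard_eq_mrank]
  exact ncard_le_mrank hB.indep (Set.subset_diff_singleton hB.subset_ground heB)

end Matroid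

/-- Deletion–contraction for the characteristic polynomial: if `e ∈ E` is not a
coloop of `M` (it does not belong to every base), then
`χ_M(T) = χ_{M∖e}(T) − χ_{M/e}(T)`, where `M∖e` is the restriction of `M` to
`E \ {e}` and `M/e` is the matroid on `E \ {e}` whose rank function is
`A ↦ rk_M(A ∪ {e}) − rk_M({e})`. -/
theorem charPoly_deletion_contraction {α : Type*} [Fintype α] (M : Matroid α)
    (e : α) (he : e ∈ M.E) (hnotcoloop : ∃ B : Set α, M.IsBase B ∧ e ∉ B)
    (Mc : Matroid α) (hMcE : Mc.E = M.E \ {e})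
    (hMcrk : ∀ A : Set α, A ⊆ M.E \ {e} →
      Mc.mrank A = M.mrank (A ∪ {e}) - M.mrank {e}) :
    M.charPoly = (M.restrict (M.E \ {e})).charPoly - Mc.charPoly := by
  classical
  set F : Finset α := (Set.toFinite M.E).toFinset with hF
  have heF : e ∈ F := by rw [hF]; exact (Set.Finite.mem_toFinset _).2 he
  set F' : Finset α := F.erase e with hF'
  have hFins : F = insert e F' := (Finset.insert_erase heF).symm
  have hcoe : ∀ A ∈ F'.powerset, (A : Set α) ⊆ M.E \ {e} := by
    intro A hA x hx
    have hx' : x ∈ F' := Finset.mem_powerset.1 hA hx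
    rw [hF', hF] at hx'
    simp only [Finset.mem_erase, Set.Finite.mem_toFinset] at hx'
    exact ⟨hx'.2, hx'.1⟩
  have hrkE : M.mrank (M.E \ {e}) = M.mrank M.E := Matroid.mrank_diff_singleton hnotcoloop
  have hdel : (M.restrict (M.E \ {e})).charPoly
      = ∑ A ∈ F'.powerset, (-1) ^ A.card * Polynomial.X ^ (M.mrank M.E - M.mrank ↑A) := by
    unfold Matroid.charPoly
    have hgr : (Set.toFinite (M.restrict (M.E \ {e})).E).toFinset = F' := by
      ext x
      simp only [hF', hF, Finset.mem_erase, Set.Finite.mem_toFinset, Matroid.restrict_ground_eq,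
        Set.mem_diff, Set.mem_singleton_iff]
      tauto
    rw [hgr]
    refine Finset.sum_congr rfl fun A hA => ?_
    rw [Matroid.restrict_ground_eq, Matroid.mrank_restrict _ (subset_refl _),
        Matroid.mrank_restrict _ (hcoe A hA), hrkE]
  have hMcg : (Set.toFinite Mc.E).toFinset = F' := by
    ext x
    simp only [hMcE, hF', hF, Finset.mem_erase, Set.Finite.mem_toFinset, Set.mem_diff,
      Set.mem_singleton_iff]
    tauto
  have hMcE' : Mc.mrank Mc.E = M.mrank M.E - M.mrank {e} := by
    rw [hMcE, hMcrk _ (subset_refl _)]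
    congr 2
    rw [Set.diff_union_self, Set.union_eq_self_of_subset_right (Set.singleton_subset_iff.2 he)]
  have hcon : Mc.charPoly
      = ∑ A ∈ F'.powerset, (-1) ^ A.card * Polynomial.X ^ (M.mrank M.E - M.mrank (insert e ↑A)) := by
    unfold Matroid.charPoly
    rw [hMcg]
    refine Finset.sum_congr rfl fun A hA => ?_
    rw [hMcE', hMcrk _ (hcoe A hA), Set.union_singleton]
    congr 2
    exact tsub_tsub_tsub_cancel_right (M.mrank_mono (by simp))
  have hmain : M.charPoly
      = (∑ A ∈ F'.powerset, (-1) ^ A.card * Polynomial.X ^ (M.mrank M.E - M.mrank ↑A))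
        + ∑ A ∈ F'.powerset,
            (-1) ^ (insert e A).card * Polynomial.X ^ (M.mrank M.E - M.mrank ↑(insert e A)) := by
    unfold Matroid.charPoly
    rw [← hF, hFins, Finset.sum_powerset_insert (Finset.notMem_erase e F)]
  rw [hmain, hdel, hcon, sub_eq_add_neg, ← Finset.sum_neg_distrib]
  congr 1
  refine Finset.sum_congr rfl fun A hA => ?_
  have heA : e ∉ A := fun h => Finset.notMem_erase e F (Finset.mem_powerset.1 hA h)
  rw [Finset.card_insert_of_notMem heA, Finset.coe_insert, pow_succ]
  ring

end
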